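/- Let X be a random walk on ℤ started at 0 with i.i.d. increments of law P_β, and let ρ := inf{i ≥ 1 : X_i ≤ 0}. Then ρ < ∞ almost surely, the pair (ρ, X_1, …, X_{ρ-1}) is independent of X_ρ, and -X_ρ follows a geometric law on {0,1,2,…} with parameter 1 - e^{-β/2}. -/

import Mathlib

set_option linter.unusedSectionVars false
set_option linter.unusedVariables false
set_option maxHeartbeats 1000000

open MeasureTheory ProbabilityTheory Filter
open scoped Classical

noncomputable section LadderAux

variable {Ω : Type*} [MeasurableSpace Ω] {μ : Measure Ω}
variable {U : ℕ → Ω → ℤ} {X : ℕ → Ω → ℤ} {ρ : Ω → ℕ} {q c : ℝ}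


lemma summable_qpow {q : ℝ} (hq0 : 0 ≤ q) (hq1 : q < 1) :
    Summable (fun k : ℤ => q ^ k.natAbs) := by
  apply Summable.of_nat_of_neg <;>
    simpa using summable_geometric_of_lt_one hq0 hq1

lemma one_le_csum {q : ℝ} (hq0 : 0 ≤ q) (hq1 : q < 1) :
    1 ≤ ∑' k : ℤ, q ^ k.natAbs := by
  have := Summable.le_tsum (summable_qpow hq0 hq1) 0 (fun _ _ => pow_nonneg hq0 _)
  simpa using this

lemma tail_tsum {q c : ℝ} (hq0 : 0 ≤ q) (hq1 : q < 1) (m : ℕ) :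
    ∑' j : ℕ, q ^ (m + j) / c = q ^ m / c * (1 - q)⁻¹ := by
  have : ∀ j : ℕ, q ^ (m + j) / c = (q ^ m / c) * q ^ j := by
    intro j; rw [pow_add]; ring
  simp only [this]
  rw [tsum_mul_left, tsum_geometric_of_lt_one hq0 hq1]


lemma meas_tail (hmeas : ∀ i, Measurable (U i)) (hq0 : 0 < q) (hq1 : q < 1) (hc : 0 < c)
    (hlaw : ∀ i : ℕ, ∀ k : ℤ, μ {ω | U i ω = k} = ENNReal.ofReal (q ^ k.natAbs / c))
    (i : ℕ) {a : ℤ} (ha : 0 ≤ a) :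
    μ ((U i) ⁻¹' Set.Iic (-a)) = ENNReal.ofReal (q ^ a.toNat / c * (1 - q)⁻¹) := by
  have hset : (U i) ⁻¹' Set.Iic (-a) = ⋃ j : ℕ, (U i) ⁻¹' {-a - (j : ℤ)} := by
    ext ω
    simp only [Set.mem_preimage, Set.mem_Iic, Set.mem_iUnion, Set.mem_singleton_iff]
    constructor
    · intro h
      refine ⟨(-a - U i ω).toNat, ?_⟩
      omega
    · rintro ⟨j, hj⟩; omega
  rw [hset, measure_iUnion]
  · have hterm : ∀ j : ℕ, μ ((U i) ⁻¹' {-a - (j : ℤ)}) =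
        ENNReal.ofReal (q ^ (a.toNat + j) / c) := by
      intro j
      have : (-a - (j : ℤ)).natAbs = a.toNat + j := by omega
      have h2 := hlaw i (-a - (j : ℤ))
      rw [this] at h2
      exact h2
    simp only [hterm]
    rw [← ENNReal.ofReal_tsum_of_nonneg, tail_tsum hq0.le hq1]
    · intro j; positivity
    · have : Summable (fun j : ℕ => (q ^ a.toNat / c) * q ^ j) :=
        (summable_geometric_of_lt_one hq0.le hq1).mul_left _
      refine this.congr fun j => ?_
      rw [pow_add]; ring
  · intro j1 j2 hne
    simp only [Function.onFun, Set.disjoint_left]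
    intro ω h1 h2
    simp only [Set.mem_preimage, Set.mem_singleton_iff] at h1 h2
    apply hne; omega
  · intro j; exact (MeasurableSet.singleton _).preimage (hmeas i)


lemma meas_cyl (hindep : iIndepFun U μ)
    (n : ℕ) (S : ℕ → Set ℤ) :
    μ (⋂ i ∈ Finset.range n, (U i) ⁻¹' S i) = ∏ i ∈ Finset.range n, μ ((U i) ⁻¹' S i) :=
  hindep.meas_biInter (fun i _ => ⟨S i, MeasurableSet.of_discrete, rfl⟩)

lemma meas_cyl_last (hindep : iIndepFun U μ)
    (n : ℕ) (d : ℕ → ℤ) (T : Set ℤ) :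
    μ ((⋂ i ∈ Finset.range n, (U i) ⁻¹' {d i}) ∩ (U n) ⁻¹' T)
      = (∏ i ∈ Finset.range n, μ ((U i) ⁻¹' {d i})) * μ ((U n) ⁻¹' T) := by
  have hS : ∀ ω, ω ∈ ((⋂ i ∈ Finset.range n, (U i) ⁻¹' {d i}) ∩ (U n) ⁻¹' T) ↔
      ω ∈ ⋂ i ∈ Finset.range (n+1), (U i) ⁻¹'
        (if i = n then T else {d i}) := by
    intro ω
    simp only [Set.mem_inter_iff, Set.mem_iInter, Set.mem_preimage, Finset.mem_range]
    constructor
    · rintro ⟨h1, h2⟩ i hi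
      by_cases hin : i = n
      · subst hin; simp [h2]
      · have : i < n := by omega
        simp [hin, h1 i this]
    · intro h
      refine ⟨fun i hi => ?_, ?_⟩
      · have := h i (by omega)
        simpa [Nat.ne_of_lt hi] using this
      · have := h n (by omega)
        simpa using this
  rw [Set.ext hS, meas_cyl hindep, Finset.prod_range_succ]
  congr 1
  · exact Finset.prod_congr rfl (fun i hi => by
      rw [Finset.mem_range] at hi
      simp [Nat.ne_of_lt hi])
  · simp

lemma meas_key (hmeas : ∀ i, Measurable (U i))
    (hindep : iIndepFun U μ)
    (hq0 : 0 < q) (hq1 : q < 1) (hc : 0 < c)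
    (hlaw : ∀ i : ℕ, ∀ k : ℤ, μ {ω | U i ω = k} = ENNReal.ofReal (q ^ k.natAbs / c))
    (n : ℕ) (d : ℕ → ℤ) {a : ℤ} (ha : 0 ≤ a) (k : ℕ) :
    μ ((⋂ i ∈ Finset.range n, (U i) ⁻¹' {d i}) ∩ (U n) ⁻¹' {-a - (k : ℤ)})
      = μ ((⋂ i ∈ Finset.range n, (U i) ⁻¹' {d i}) ∩ (U n) ⁻¹' Set.Iic (-a))
        * ENNReal.ofReal ((1 - q) * q ^ k) := by
  rw [meas_cyl_last hindep, meas_cyl_last hindep]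
  rw [meas_tail hmeas hq0 hq1 hc hlaw n ha]
  have hsing : μ ((U n) ⁻¹' {-a - (k : ℤ)}) = ENNReal.ofReal (q ^ (a.toNat + k) / c) := by
    have hNA : (-a - (k : ℤ)).natAbs = a.toNat + k := by omega
    have := hlaw n (-a - (k : ℤ))
    rw [hNA] at this
    exact this
  rw [hsing, mul_assoc]
  congr 1
  have h1q' : (0:ℝ) < 1 - q := by linarith
  rw [← ENNReal.ofReal_mul (by positivity)]
  congr 1
  have h1q : (1 : ℝ) - q ≠ 0 := by linarith
  field_simp
  ring

/-- path values: pv n a 0 = 0, pv n a j = a (j-1) for 1 ≤ j ≤ n, 0 beyond. -/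
def pv (n : ℕ) (a : Fin n → ℤ) : ℕ → ℤ :=
  fun j => if h : j - 1 < n ∧ 0 < j then a ⟨j - 1, h.1⟩ else 0

lemma pv_zero (n : ℕ) (a : Fin n → ℤ) : pv n a 0 = 0 := by simp [pv]

lemma pv_succ (n : ℕ) (a : Fin n → ℤ) (j : ℕ) (hj : j < n) :
    pv n a (j + 1) = a ⟨j, hj⟩ := by simp [pv, hj]

lemma pv_gt (n : ℕ) (a : Fin n → ℤ) (j : ℕ) (hj : n < j) : pv n a j = 0 := by
  have : ¬ (j - 1 < n ∧ 0 < j) := by omega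
  simp [pv, this]

lemma Xsucc (hX : ∀ n ω, X n ω = ∑ i ∈ Finset.range n, U i ω) (j : ℕ) (ω : Ω) :
    X (j + 1) ω = X j ω + U j ω := by
  rw [hX, hX, Finset.sum_range_succ]

lemma Xzero (hX : ∀ n ω, X n ω = ∑ i ∈ Finset.range n, U i ω) (ω : Ω) : X 0 ω = 0 := by
  simp [hX]

/-- From the path description, all values X i ω for i ≤ n. -/
lemma Xval (hX : ∀ n ω, X n ω = ∑ i ∈ Finset.range n, U i ω)
    {n : ℕ} {a : Fin n → ℤ} {ω : Ω} (h : ∀ j : Fin n, X (↑j + 1) ω = a j)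
    {i : ℕ} (hi : i ≤ n) : X i ω = pv n a i := by
  rcases Nat.eq_zero_or_pos i with h0 | h0
  · subst h0; rw [Xzero hX, pv_zero]
  · obtain ⟨j, rfl⟩ : ∃ j, i = j + 1 := ⟨i - 1, by omega⟩
    have hj : j < n := by omega
    rw [pv_succ n a j hj]
    exact h ⟨j, hj⟩

lemma trans_iff (hX : ∀ n ω, X n ω = ∑ i ∈ Finset.range n, U i ω)
    {n : ℕ} {a : Fin n → ℤ} {ω : Ω} :
    (∀ j : Fin n, X (↑j + 1) ω = a j) ↔
      (∀ i, i < n → U i ω = pv n a (i + 1) - pv n a i) := by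
  constructor
  · intro h i hi
    have h1 : X i ω = pv n a i := Xval hX h (by omega)
    have h2 : X (i + 1) ω = pv n a (i + 1) := Xval hX h (by omega)
    have := Xsucc hX i ω
    omega
  · intro h
    have key : ∀ i, i ≤ n → X i ω = pv n a i := by
      intro i hi
      induction i with
      | zero => rw [Xzero hX, pv_zero]
      | succ j ih =>
        rw [Xsucc hX j ω, ih (by omega), h j (by omega)]
        ring
    intro j
    rw [key (↑j + 1) (by omega), pv_succ n a j j.isLt]

/-- the atom events -/
def Cev (X : ℕ → Ω → ℤ) (n : ℕ) (a : Fin n → ℤ) : Set Ω :=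
  {ω | (∀ j : Fin n, X (↑j + 1) ω = a j) ∧ X (n + 1) ω ≤ 0}

def CevK (X : ℕ → Ω → ℤ) (n : ℕ) (a : Fin n → ℤ) (k : ℕ) : Set Ω :=
  {ω | (∀ j : Fin n, X (↑j + 1) ω = a j) ∧ X (n + 1) ω = -(k : ℤ)}

lemma Cev_eq (hX : ∀ n ω, X n ω = ∑ i ∈ Finset.range n, U i ω) (n : ℕ) (a : Fin n → ℤ) :
    Cev X n a = (⋂ i ∈ Finset.range n, (U i) ⁻¹' {pv n a (i + 1) - pv n a i})
      ∩ (U n) ⁻¹' Set.Iic (-(pv n a n)) := by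
  ext ω
  simp only [Cev, Set.mem_setOf_eq, Set.mem_inter_iff, Set.mem_iInter, Set.mem_preimage,
    Finset.mem_range, Set.mem_Iic]
  constructor
  · rintro ⟨h1, h2⟩
    have hXn : X n ω = pv n a n := Xval hX h1 le_rfl
    have := Xsucc hX n ω
    exact ⟨fun i hi => (trans_iff hX).1 h1 i hi, by omega⟩
  · rintro ⟨h1, h2⟩
    have h1' : ∀ j : Fin n, X (↑j + 1) ω = a j := (trans_iff hX).2 (fun i hi => h1 i hi)
    have hXn : X n ω = pv n a n := Xval hX h1' le_rfl
    have := Xsucc hX n ω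
    exact ⟨h1', by omega⟩

lemma CevK_eq (hX : ∀ n ω, X n ω = ∑ i ∈ Finset.range n, U i ω) (n : ℕ) (a : Fin n → ℤ)
    (k : ℕ) :
    CevK X n a k = (⋂ i ∈ Finset.range n, (U i) ⁻¹' {pv n a (i + 1) - pv n a i})
      ∩ (U n) ⁻¹' {-(pv n a n) - (k : ℤ)} := by
  ext ω
  simp only [CevK, Set.mem_setOf_eq, Set.mem_inter_iff, Set.mem_iInter, Set.mem_preimage,
    Finset.mem_range, Set.mem_singleton_iff]
  constructor
  · rintro ⟨h1, h2⟩
    have hXn : X n ω = pv n a n := Xval hX h1 le_rfl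
    have := Xsucc hX n ω
    exact ⟨fun i hi => (trans_iff hX).1 h1 i hi, by omega⟩
  · rintro ⟨h1, h2⟩
    have h1' : ∀ j : Fin n, X (↑j + 1) ω = a j := (trans_iff hX).2 (fun i hi => h1 i hi)
    have hXn : X n ω = pv n a n := Xval hX h1' le_rfl
    have := Xsucc hX n ω
    exact ⟨h1', by omega⟩


lemma pv_nonneg_last {n : ℕ} {a : Fin n → ℤ} (hg : ∀ j, 1 ≤ a j) : 0 ≤ pv n a n := by
  rcases Nat.eq_zero_or_pos n with h0 | h0
  · subst h0; rw [pv_zero]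
  · obtain ⟨m, rfl⟩ : ∃ m, n = m + 1 := ⟨n - 1, by omega⟩
    rw [pv_succ _ a m (by omega)]
    exact le_trans (by norm_num) (hg _)

lemma rho_on_Cev (hX : ∀ n ω, X n ω = ∑ i ∈ Finset.range n, U i ω)
    (hρ : ∀ ω, ρ ω = sInf {i : ℕ | 1 ≤ i ∧ X i ω ≤ 0})
    {n : ℕ} {a : Fin n → ℤ} (hg : ∀ j, 1 ≤ a j) {ω : Ω} (hω : ω ∈ Cev X n a) :
    ρ ω = n + 1 := by
  obtain ⟨h1, h2⟩ := hω
  have hmem : (n + 1) ∈ {i : ℕ | 1 ≤ i ∧ X i ω ≤ 0} := ⟨by omega, h2⟩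
  have hlb : ∀ m ∈ {i : ℕ | 1 ≤ i ∧ X i ω ≤ 0}, n + 1 ≤ m := by
    rintro m ⟨hm1, hm2⟩
    by_contra hlt
    have hm : m ≤ n := by omega
    have : X m ω = pv n a m := Xval hX h1 hm
    obtain ⟨j, rfl⟩ : ∃ j, m = j + 1 := ⟨m - 1, by omega⟩
    rw [pv_succ n a j (by omega)] at this
    have := hg ⟨j, by omega⟩
    omega
  rw [hρ ω]
  have hne : {i : ℕ | 1 ≤ i ∧ X i ω ≤ 0}.Nonempty := ⟨n + 1, hmem⟩
  exact le_antisymm (Nat.sInf_le hmem) (hlb _ (Nat.sInf_mem hne))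

lemma V_on_Cev (hX : ∀ n ω, X n ω = ∑ i ∈ Finset.range n, U i ω)
    (hρ : ∀ ω, ρ ω = sInf {i : ℕ | 1 ≤ i ∧ X i ω ≤ 0})
    {n : ℕ} {a : Fin n → ℤ} (hg : ∀ j, 1 ≤ a j) {ω : Ω} (hω : ω ∈ Cev X n a) :
    (ρ ω, fun i : ℕ => if i < ρ ω then X i ω else 0) = (n + 1, pv n a) := by
  have hr := rho_on_Cev hX hρ hg hω
  refine Prod.ext hr ?_
  funext i
  simp only [hr]
  by_cases hi : i < n + 1
  · simp only [hi, if_true]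
    exact Xval hX hω.1 (by omega)
  · simp only [hi, if_false]
    exact (pv_gt n a i (by omega)).symm

lemma exists_atom (hX : ∀ n ω, X n ω = ∑ i ∈ Finset.range n, U i ω)
    (hρ : ∀ ω, ρ ω = sInf {i : ℕ | 1 ≤ i ∧ X i ω ≤ 0})
    {ω : Ω} (h : ∃ i, 1 ≤ i ∧ X i ω ≤ 0) :
    ∃ (n : ℕ) (a : Fin n → ℤ), (∀ j, 1 ≤ a j) ∧ ω ∈ Cev X n a := by
  have hne : {i : ℕ | 1 ≤ i ∧ X i ω ≤ 0}.Nonempty := by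
    obtain ⟨i, hi⟩ := h; exact ⟨i, hi⟩
  have hmem := Nat.sInf_mem hne
  obtain ⟨hr1, hr2⟩ := hmem
  obtain ⟨n, hn⟩ : ∃ n, sInf {i : ℕ | 1 ≤ i ∧ X i ω ≤ 0} = n + 1 :=
    ⟨sInf {i : ℕ | 1 ≤ i ∧ X i ω ≤ 0} - 1, by omega⟩
  rw [hn] at hr2
  refine ⟨n, fun j => X (↑j + 1) ω, fun j => ?_, fun j => rfl, hr2⟩
  by_contra hle
  push_neg at hle
  have hj : (↑j + 1 : ℕ) ∈ {i : ℕ | 1 ≤ i ∧ X i ω ≤ 0} := ⟨by omega, by omega⟩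
  have h5 := Nat.sInf_le hj
  rw [hn] at h5
  have := j.isLt
  omega

lemma Cev_disjoint (hX : ∀ n ω, X n ω = ∑ i ∈ Finset.range n, U i ω)
    (hρ : ∀ ω, ρ ω = sInf {i : ℕ | 1 ≤ i ∧ X i ω ≤ 0})
    {n n' : ℕ} {a : Fin n → ℤ} {a' : Fin n' → ℤ}
    (hg : ∀ j, 1 ≤ a j) (hg' : ∀ j, 1 ≤ a' j)
    (hne : ¬ (⟨n, a⟩ : (m : ℕ) × (Fin m → ℤ)) = ⟨n', a'⟩) :
    Disjoint (Cev X n a) (Cev X n' a') := by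
  rw [Set.disjoint_left]
  intro ω h1 h2
  have e1 := rho_on_Cev hX hρ hg h1
  have e2 := rho_on_Cev hX hρ hg' h2
  have hnn : n = n' := by omega
  subst hnn
  apply hne
  congr 1
  funext j
  rw [← h1.1 j, ← h2.1 j]


def nuq (q : ℝ) (t : Set ℤ) : ENNReal :=
  ∑' k : ℕ, if -(k : ℤ) ∈ t then ENNReal.ofReal ((1 - q) * q ^ k) else 0


lemma Cev_meas (hmeas : ∀ i, Measurable (U i))
    (hX : ∀ n ω, X n ω = ∑ i ∈ Finset.range n, U i ω) (n : ℕ) (a : Fin n → ℤ) :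
    MeasurableSet (Cev X n a) := by
  rw [Cev_eq hX]
  exact MeasurableSet.inter
    (MeasurableSet.biInter (Set.to_countable _)
      (fun i _ => (MeasurableSet.singleton _).preimage (hmeas i)))
    (measurableSet_Iic.preimage (hmeas n))

lemma CevK_meas (hmeas : ∀ i, Measurable (U i))
    (hX : ∀ n ω, X n ω = ∑ i ∈ Finset.range n, U i ω) (n : ℕ) (a : Fin n → ℤ) (k : ℕ) :
    MeasurableSet (CevK X n a k) := by
  rw [CevK_eq hX]
  exact MeasurableSet.inter
    (MeasurableSet.biInter (Set.to_countable _)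
      (fun i _ => (MeasurableSet.singleton _).preimage (hmeas i)))
    ((MeasurableSet.singleton _).preimage (hmeas n))

lemma meas_CevK_ratio (hmeas : ∀ i, Measurable (U i))
    (hindep : iIndepFun U μ)
    (hq0 : 0 < q) (hq1 : q < 1) (hc : 0 < c)
    (hlaw : ∀ i : ℕ, ∀ k : ℤ, μ {ω | U i ω = k} = ENNReal.ofReal (q ^ k.natAbs / c))
    (hX : ∀ n ω, X n ω = ∑ i ∈ Finset.range n, U i ω)
    {n : ℕ} {a : Fin n → ℤ} (hg : ∀ j, 1 ≤ a j) (k : ℕ) :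
    μ (CevK X n a k) = μ (Cev X n a) * ENNReal.ofReal ((1 - q) * q ^ k) := by
  rw [Cev_eq hX, CevK_eq hX]
  exact meas_key hmeas hindep hq0 hq1 hc hlaw n _ (pv_nonneg_last hg) k

lemma CevK_subset (n : ℕ) (a : Fin n → ℤ) (k : ℕ) : CevK X n a k ⊆ Cev X n a := by
  rintro ω ⟨h1, h2⟩
  exact ⟨h1, by omega⟩

lemma CevK_disjoint (n : ℕ) (a : Fin n → ℤ) {k k' : ℕ} (hkk : k ≠ k') :
    Disjoint (CevK X n a k) (CevK X n a k') := by
  rw [Set.disjoint_left]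
  rintro ω ⟨_, h2⟩ ⟨_, h2'⟩
  rw [h2] at h2'
  exact hkk (by omega)

lemma atom_inter_W (hX : ∀ n ω, X n ω = ∑ i ∈ Finset.range n, U i ω)
    (hρ : ∀ ω, ρ ω = sInf {i : ℕ | 1 ≤ i ∧ X i ω ≤ 0})
    {n : ℕ} {a : Fin n → ℤ} (hg : ∀ j, 1 ≤ a j) (t : Set ℤ) :
    Cev X n a ∩ (fun ω => X (ρ ω) ω) ⁻¹' t
      = ⋃ k : ℕ, if -(k : ℤ) ∈ t then CevK X n a k else (∅ : Set Ω) := by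
  ext ω
  simp only [Set.mem_inter_iff, Set.mem_preimage, Set.mem_iUnion]
  constructor
  · rintro ⟨hω, ht⟩
    have hr := rho_on_Cev hX hρ hg hω
    rw [hr] at ht
    refine ⟨(-(X (n+1) ω)).toNat, ?_⟩
    have hk : -(((-(X (n+1) ω)).toNat : ℕ) : ℤ) = X (n+1) ω := by
      have := hω.2; omega
    rw [hk, if_pos ht]
    exact ⟨hω.1, by omega⟩
  · rintro ⟨k, hk⟩
    by_cases hmem : -(k : ℤ) ∈ t
    · rw [if_pos hmem] at hk
      have hω : ω ∈ Cev X n a := CevK_subset n a k hk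
      have hr := rho_on_Cev hX hρ hg hω
      refine ⟨hω, ?_⟩
      rw [hr, hk.2]
      exact hmem
    · rw [if_neg hmem] at hk
      exact absurd hk (Set.notMem_empty ω)

lemma meas_atom_inter (hmeas : ∀ i, Measurable (U i))
    (hindep : iIndepFun U μ)
    (hq0 : 0 < q) (hq1 : q < 1) (hc : 0 < c)
    (hlaw : ∀ i : ℕ, ∀ k : ℤ, μ {ω | U i ω = k} = ENNReal.ofReal (q ^ k.natAbs / c))
    (hX : ∀ n ω, X n ω = ∑ i ∈ Finset.range n, U i ω)
    (hρ : ∀ ω, ρ ω = sInf {i : ℕ | 1 ≤ i ∧ X i ω ≤ 0})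
    {n : ℕ} {a : Fin n → ℤ} (hg : ∀ j, 1 ≤ a j) (t : Set ℤ) :
    μ (Cev X n a ∩ (fun ω => X (ρ ω) ω) ⁻¹' t) = μ (Cev X n a) * nuq q t := by
  rw [atom_inter_W hX hρ hg t, measure_iUnion]
  · rw [nuq, ← ENNReal.tsum_mul_left]
    congr 1
    funext k
    by_cases hmem : -(k : ℤ) ∈ t
    · rw [if_pos hmem, if_pos hmem, meas_CevK_ratio hmeas hindep hq0 hq1 hc hlaw hX hg k]
    · rw [if_neg hmem, if_neg hmem, measure_empty, mul_zero]
  · intro k k' hkk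
    by_cases h1 : -(k : ℤ) ∈ t <;> by_cases h2 : -(k' : ℤ) ∈ t <;>
      simp only [Function.onFun, h1, h2, if_true, if_false]
    · exact CevK_disjoint n a hkk
    all_goals simp
  · intro k
    by_cases hmem : -(k : ℤ) ∈ t
    · rw [if_pos hmem]; exact CevK_meas hmeas hX n a k
    · rw [if_neg hmem]; exact MeasurableSet.empty


lemma main_decomp [IsProbabilityMeasure μ] (hmeas : ∀ i, Measurable (U i))
    (hindep : iIndepFun U μ)
    (hq0 : 0 < q) (hq1 : q < 1) (hc : 0 < c)
    (hlaw : ∀ i : ℕ, ∀ k : ℤ, μ {ω | U i ω = k} = ENNReal.ofReal (q ^ k.natAbs / c))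
    (hX : ∀ n ω, X n ω = ∑ i ∈ Finset.range n, U i ω)
    (hρ : ∀ ω, ρ ω = sInf {i : ℕ | 1 ≤ i ∧ X i ω ≤ 0})
    (part1 : μ {ω | ∃ i, 1 ≤ i ∧ X i ω ≤ 0}ᶜ = 0)
    (s : Set (ℕ × (ℕ → ℤ))) (t : Set ℤ) :
    μ ((fun ω => (ρ ω, fun i : ℕ => if i < ρ ω then X i ω else 0)) ⁻¹' s
        ∩ (fun ω => X (ρ ω) ω) ⁻¹' t)
      = (∑' ι : (m : ℕ) × (Fin m → ℤ),
          if (∀ j, 1 ≤ ι.2 j) ∧ ((ι.1 + 1 : ℕ), pv ι.1 ι.2) ∈ s then μ (Cev X ι.1 ι.2) else 0)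
        * nuq q t := by
  set V : Ω → ℕ × (ℕ → ℤ) := fun ω => (ρ ω, fun i : ℕ => if i < ρ ω then X i ω else 0) with hV
  set W : Ω → ℤ := fun ω => X (ρ ω) ω with hW
  set F : Set Ω := {ω | ∃ i, 1 ≤ i ∧ X i ω ≤ 0} with hF
  set D : ((m : ℕ) × (Fin m → ℤ)) → Set Ω := fun ι =>
    if (∀ j, 1 ≤ ι.2 j) ∧ ((ι.1 + 1 : ℕ), pv ι.1 ι.2) ∈ s
    then Cev X ι.1 ι.2 ∩ W ⁻¹' t else ∅ with hD
  have step1 : μ (V ⁻¹' s ∩ W ⁻¹' t) = μ ((V ⁻¹' s ∩ W ⁻¹' t) ∩ F) :=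
    (measure_inter_conull part1).symm
  have step2 : (V ⁻¹' s ∩ W ⁻¹' t) ∩ F = ⋃ ι, D ι := by
    ext ω
    constructor
    · rintro ⟨⟨hs, ht⟩, hFω⟩
      obtain ⟨n, a, hg, hω⟩ := exists_atom hX hρ hFω
      have hVval := V_on_Cev hX hρ hg hω
      refine Set.mem_iUnion.2 ⟨⟨n, a⟩, ?_⟩
      rw [hD]
      simp only
      rw [if_pos ⟨hg, by rw [← hVval]; exact hs⟩]
      exact ⟨hω, ht⟩
    · intro hω
      obtain ⟨ι, hι⟩ := Set.mem_iUnion.1 hω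
      rw [hD] at hι
      simp only at hι
      by_cases hcond : (∀ j, 1 ≤ ι.2 j) ∧ ((ι.1 + 1 : ℕ), pv ι.1 ι.2) ∈ s
      · rw [if_pos hcond] at hι
        obtain ⟨hω1, hω2⟩ := hι
        have hVval := V_on_Cev hX hρ hcond.1 hω1
        refine ⟨⟨?_, hω2⟩, ⟨ι.1 + 1, by omega, hω1.2⟩⟩
        show V ω ∈ s
        rw [hV]
        simp only
        rw [hVval]
        exact hcond.2
      · rw [if_neg hcond] at hι
        exact absurd hι (Set.notMem_empty ω)
  have hDmeas : ∀ ι, MeasurableSet (D ι) := by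
    rintro ⟨n, a⟩
    rw [hD]
    simp only
    split_ifs with h
    · rw [atom_inter_W hX hρ h.1 t]
      refine MeasurableSet.iUnion (fun k => ?_)
      split_ifs
      · exact CevK_meas hmeas hX n a k
      · exact MeasurableSet.empty
    · exact MeasurableSet.empty
  have hDdisj : Pairwise (Function.onFun Disjoint D) := by
    rintro ι ι' hne
    rw [Function.onFun, hD]
    simp only
    split_ifs with h1 h2
    · exact Disjoint.mono Set.inter_subset_left Set.inter_subset_left
        (Cev_disjoint hX hρ h1.1 h2.1 (by
          obtain ⟨n, a⟩ := ι; obtain ⟨n', a'⟩ := ι'; exact hne))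
    all_goals simp
  have step3 : μ (⋃ ι, D ι) = ∑' ι, μ (D ι) := measure_iUnion hDdisj hDmeas
  have step4 : ∀ ι : (m : ℕ) × (Fin m → ℤ), μ (D ι) =
      (if (∀ j, 1 ≤ ι.2 j) ∧ ((ι.1 + 1 : ℕ), pv ι.1 ι.2) ∈ s
        then μ (Cev X ι.1 ι.2) else 0) * nuq q t := by
    rintro ⟨n, a⟩
    rw [hD]
    simp only
    split_ifs with h
    · exact meas_atom_inter hmeas hindep hq0 hq1 hc hlaw hX hρ h.1 t
    · simp
  rw [step1, step2, step3]
  rw [tsum_congr step4, ENNReal.tsum_mul_right]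

lemma proj_decomp [IsProbabilityMeasure μ] (hmeas : ∀ i, Measurable (U i))
    (hX : ∀ n ω, X n ω = ∑ i ∈ Finset.range n, U i ω)
    (hρ : ∀ ω, ρ ω = sInf {i : ℕ | 1 ≤ i ∧ X i ω ≤ 0})
    (part1 : μ {ω | ∃ i, 1 ≤ i ∧ X i ω ≤ 0}ᶜ = 0)
    (s : Set (ℕ × (ℕ → ℤ))) :
    μ ((fun ω => (ρ ω, fun i : ℕ => if i < ρ ω then X i ω else 0)) ⁻¹' s)
      = ∑' ι : (m : ℕ) × (Fin m → ℤ),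
          if (∀ j, 1 ≤ ι.2 j) ∧ ((ι.1 + 1 : ℕ), pv ι.1 ι.2) ∈ s
          then μ (Cev X ι.1 ι.2) else 0 := by
  set V : Ω → ℕ × (ℕ → ℤ) := fun ω => (ρ ω, fun i : ℕ => if i < ρ ω then X i ω else 0) with hV
  set F : Set Ω := {ω | ∃ i, 1 ≤ i ∧ X i ω ≤ 0} with hF
  set D : ((m : ℕ) × (Fin m → ℤ)) → Set Ω := fun ι =>
    if (∀ j, 1 ≤ ι.2 j) ∧ ((ι.1 + 1 : ℕ), pv ι.1 ι.2) ∈ s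
    then Cev X ι.1 ι.2 else ∅ with hD
  have step1 : μ (V ⁻¹' s) = μ (V ⁻¹' s ∩ F) := (measure_inter_conull part1).symm
  have step2 : V ⁻¹' s ∩ F = ⋃ ι, D ι := by
    ext ω
    constructor
    · rintro ⟨hs, hFω⟩
      obtain ⟨n, a, hg, hω⟩ := exists_atom hX hρ hFω
      have hVval := V_on_Cev hX hρ hg hω
      refine Set.mem_iUnion.2 ⟨⟨n, a⟩, ?_⟩
      rw [hD]
      simp only
      rw [if_pos ⟨hg, by rw [← hVval]; exact hs⟩]
      exact hω
    · intro hω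
      obtain ⟨ι, hι⟩ := Set.mem_iUnion.1 hω
      rw [hD] at hι
      simp only at hι
      by_cases hcond : (∀ j, 1 ≤ ι.2 j) ∧ ((ι.1 + 1 : ℕ), pv ι.1 ι.2) ∈ s
      · rw [if_pos hcond] at hι
        have hVval := V_on_Cev hX hρ hcond.1 hι
        refine ⟨?_, ⟨ι.1 + 1, by omega, hι.2⟩⟩
        show V ω ∈ s
        rw [hV]
        simp only
        rw [hVval]
        exact hcond.2
      · rw [if_neg hcond] at hι
        exact absurd hι (Set.notMem_empty ω)
  have hDmeas : ∀ ι, MeasurableSet (D ι) := by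
    rintro ⟨n, a⟩
    rw [hD]
    simp only
    split_ifs
    · exact Cev_meas hmeas hX n a
    · exact MeasurableSet.empty
  have hDdisj : Pairwise (Function.onFun Disjoint D) := by
    rintro ι ι' hne
    rw [Function.onFun, hD]
    simp only
    split_ifs with h1 h2
    · exact Cev_disjoint hX hρ h1.1 h2.1 (by
        obtain ⟨n, a⟩ := ι; obtain ⟨n', a'⟩ := ι'; exact hne)
    all_goals simp
  rw [step1, step2, measure_iUnion hDdisj hDmeas]
  refine tsum_congr ?_
  rintro ⟨n, a⟩
  rw [hD]
  simp only
  split_ifs <;> simp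


lemma meas_pos_part (hmeas : ∀ i, Measurable (U i)) (hq0 : 0 < q) (hq1 : q < 1) (hc : 0 < c)
    (hlaw : ∀ i : ℕ, ∀ k : ℤ, μ {ω | U i ω = k} = ENNReal.ofReal (q ^ k.natAbs / c))
    (i : ℕ) :
    μ ((U i) ⁻¹' Set.Ici 1) = ENNReal.ofReal (q / c * (1 - q)⁻¹) := by
  have hset : (U i) ⁻¹' Set.Ici 1 = ⋃ j : ℕ, (U i) ⁻¹' {1 + (j : ℤ)} := by
    ext ω
    simp only [Set.mem_preimage, Set.mem_Ici, Set.mem_iUnion, Set.mem_singleton_iff]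
    constructor
    · intro h; exact ⟨(U i ω - 1).toNat, by omega⟩
    · rintro ⟨j, hj⟩; omega
  rw [hset, measure_iUnion]
  · have hterm : ∀ j : ℕ, μ ((U i) ⁻¹' {1 + (j : ℤ)}) =
        ENNReal.ofReal (q ^ (1 + j) / c) := by
      intro j
      have hna : (1 + (j : ℤ)).natAbs = 1 + j := by omega
      have h2 := hlaw i (1 + (j : ℤ))
      rw [hna] at h2
      exact h2
    simp only [hterm]
    rw [← ENNReal.ofReal_tsum_of_nonneg, tail_tsum hq0.le hq1, pow_one]
    · intro j; positivity
    · have : Summable (fun j : ℕ => (q ^ 1 / c) * q ^ j) :=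
        (summable_geometric_of_lt_one hq0.le hq1).mul_left _
      refine this.congr fun j => ?_
      rw [pow_add]; ring
  · intro j1 j2 hne
    simp only [Function.onFun, Set.disjoint_left]
    intro ω h1 h2
    simp only [Set.mem_preimage, Set.mem_singleton_iff] at h1 h2
    apply hne; omega
  · intro j; exact (MeasurableSet.singleton _).preimage (hmeas i)

/-- the walk is a.s. unbounded: bounded paths have measure zero -/
lemma bounded_null [IsProbabilityMeasure μ] (hmeas : ∀ i, Measurable (U i))
    (hindep : iIndepFun U μ)
    (hq0 : 0 < q) (hq1 : q < 1) (hc : 0 < c)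
    (hlaw : ∀ i : ℕ, ∀ k : ℤ, μ {ω | U i ω = k} = ENNReal.ofReal (q ^ k.natAbs / c))
    (hX : ∀ n ω, X n ω = ∑ i ∈ Finset.range n, U i ω)
    (M : ℕ) :
    μ {ω | ∀ n, |X n ω| ≤ (M : ℤ)} = 0 := by
  set L : ℕ := 2 * M + 1 with hL
  set e : ENNReal := ENNReal.ofReal (q / c * (1 - q)⁻¹) with he
  set E : ℕ → Set Ω := fun j => ⋂ i ∈ Finset.Ico (j * L) (j * L + L), (U i) ⁻¹' Set.Ici 1
    with hE
  have hEmeasSet : ∀ j, MeasurableSet (E j) :=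
    fun j => MeasurableSet.biInter (Set.to_countable _)
      (fun i _ => measurableSet_Ici.preimage (hmeas i))
  have hmeasE : ∀ j, μ (E j) = e ^ L := by
    intro j
    rw [hE]
    simp only
    rw [hindep.meas_biInter (fun i _ => ⟨Set.Ici 1, MeasurableSet.of_discrete, rfl⟩)]
    rw [Finset.prod_congr rfl (fun i _ => meas_pos_part hmeas hq0 hq1 hc hlaw i)]
    rw [Finset.prod_const, Nat.card_Ico]
    congr 1
    omega
  set K : ℕ → Set Ω := fun J => ⋂ j ∈ Finset.range J, (E j)ᶜ with hK
  have hKmeasSet : ∀ J, MeasurableSet (K J) :=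
    fun J => MeasurableSet.biInter (Set.to_countable _) (fun j _ => (hEmeasSet j).compl)
  -- independence of K J and E J
  have hKE : ∀ J, μ (K J ∩ E J) = μ (K J) * μ (E J) := by
    intro J
    have hdisj : Disjoint {i : ℕ | i < J * L} (Set.Ico (J * L) (J * L + L)) := by
      rw [Set.disjoint_left]
      intro i hi1 hi2
      simp only [Set.mem_setOf_eq] at hi1
      simp only [Set.mem_Ico] at hi2
      omega
    have hIndep := indep_iSup_of_disjoint
      (fun i => (hmeas i).comap_le) hindep.iIndep hdisj
    refine (Indep_iff _ _ _).1 hIndep _ _ ?_ ?_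
    · -- K J measurable wrt sup over {i < J*L}
      refine MeasurableSet.biInter (Set.to_countable _) (fun j hj => ?_)
      refine MeasurableSet.compl ?_
      refine MeasurableSet.biInter (Set.to_countable _) (fun i hi => ?_)
      have hiS : i ∈ {i : ℕ | i < J * L} := by
        have hj' : j < J := Finset.mem_range.1 hj
        have hi' : j * L ≤ i ∧ i < j * L + L := Finset.mem_Ico.1 hi
        simp only [Set.mem_setOf_eq]
        have hmul : j * L + L ≤ J * L := by
          calc j * L + L = (j + 1) * L := by ring
          _ ≤ J * L := Nat.mul_le_mul_right L (by omega)
        omega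
      exact le_iSup₂ (f := fun (i : ℕ) (_ : i ∈ {i : ℕ | i < J * L}) =>
          MeasurableSpace.comap (U i) inferInstance) i hiS
        _ ⟨Set.Ici 1, MeasurableSet.of_discrete, rfl⟩
    · refine MeasurableSet.biInter (Set.to_countable _) (fun i hi => ?_)
      have hiT : i ∈ Set.Ico (J * L) (J * L + L) := by
        have hi' : J * L ≤ i ∧ i < J * L + L := Finset.mem_Ico.1 hi
        exact ⟨hi'.1, hi'.2⟩
      exact le_iSup₂ (f := fun (i : ℕ) (_ : i ∈ Set.Ico (J * L) (J * L + L)) =>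
          MeasurableSpace.comap (U i) inferInstance) i hiT
        _ ⟨Set.Ici 1, MeasurableSet.of_discrete, rfl⟩
  -- recursion
  have hrec : ∀ J, μ (K (J + 1)) = μ (K J) * (1 - e ^ L) := by
    intro J
    have hsplit : K J = (K J ∩ E J) ∪ (K J ∩ (E J)ᶜ) := by
      rw [← Set.inter_union_distrib_left, Set.union_compl_self, Set.inter_univ]
    have hKsucc : K (J + 1) = K J ∩ (E J)ᶜ := by
      rw [hK]
      simp only
      rw [Finset.range_add_one, Finset.set_biInter_insert]
      exact Set.inter_comm _ _
    have hadd : μ (K J ∩ E J) + μ (K J ∩ (E J)ᶜ) = μ (K J) := by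
      have h0 := measure_inter_add_diff (μ := μ) (K J) (hEmeasSet J)
      rw [Set.diff_eq] at h0
      exact h0
    rw [hKsucc]
    have hfin : μ (K J ∩ E J) ≠ ⊤ := measure_ne_top μ _
    have : μ (K J ∩ (E J)ᶜ) = μ (K J) - μ (K J ∩ E J) := by
      rw [← hadd]
      rw [ENNReal.add_sub_cancel_left hfin]
    rw [this, hKE J, hmeasE J, ENNReal.mul_sub (fun _ _ => measure_ne_top μ _), mul_one]
  have hKbound : ∀ J, μ (K J) ≤ (1 - e ^ L) ^ J := by
    intro J
    induction J with
    | zero => simpa using prob_le_one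
    | succ J ih =>
      rw [hrec J, pow_succ]
      exact mul_le_mul_left ih _
  -- G ⊆ K J
  have hGsub : ∀ J, {ω | ∀ n, |X n ω| ≤ (M : ℤ)} ⊆ K J := by
    intro J ω hω
    refine Set.mem_iInter₂.2 (fun j _ => ?_)
    intro hEj
    have hsum : (L : ℤ) ≤ ∑ i ∈ Finset.Ico (j * L) (j * L + L), U i ω := by
      have hcard := Finset.card_nsmul_le_sum (Finset.Ico (j * L) (j * L + L))
        (fun i => U i ω) 1 (fun i hi => Set.mem_iInter₂.1 hEj i hi)
      rw [Nat.card_Ico] at hcard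
      have : j * L + L - j * L = L := by omega
      rw [this] at hcard
      simpa using hcard
    have hdiff : X (j * L + L) ω - X (j * L) ω
        = ∑ i ∈ Finset.Ico (j * L) (j * L + L), U i ω := by
      rw [hX, hX, Finset.sum_Ico_eq_sub _ (by omega)]
    have h1 := abs_le.1 (hω (j * L + L))
    have h2 := abs_le.1 (hω (j * L))
    have hLM : (L : ℤ) = 2 * M + 1 := by rw [hL]; push_cast; ring
    omega
  -- conclude
  have hepos : e ≠ 0 := by
    rw [he]
    simp only [ne_eq, ENNReal.ofReal_eq_zero, not_le]
    have h1q : (0 : ℝ) < 1 - q := by linarith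
    positivity
  have heL : (1 : ENNReal) - e ^ L < 1 := by
    refine ENNReal.sub_lt_self ENNReal.one_ne_top one_ne_zero ?_
    exact pow_ne_zero L hepos
  have htend : Tendsto (fun J => (1 - e ^ L) ^ J) atTop (nhds 0) :=
    ENNReal.tendsto_pow_atTop_nhds_zero_of_lt_one heL
  have hle0 : μ {ω | ∀ n, |X n ω| ≤ (M : ℤ)} ≤ 0 :=
    ge_of_tendsto' htend (fun J => le_trans (measure_mono (hGsub J)) (hKbound J))
  exact le_antisymm hle0 (zero_le)


def extN (N : ℕ) (u : Fin N → ℤ) : ℕ → ℤ := fun i => if h : i < N then u ⟨i, h⟩ else 0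

def cylN (U : ℕ → Ω → ℤ) (N : ℕ) (u : Fin N → ℤ) : Set Ω :=
  ⋂ i ∈ Finset.range N, (U i) ⁻¹' {extN N u i}

lemma meas_cylN (hindep : iIndepFun U μ)
    (hlaw : ∀ i : ℕ, ∀ k : ℤ, μ {ω | U i ω = k} = ENNReal.ofReal (q ^ k.natAbs / c))
    (N : ℕ) (u : Fin N → ℤ) :
    μ (cylN U N u) = ∏ i ∈ Finset.range N, ENNReal.ofReal (q ^ (extN N u i).natAbs / c) := by
  rw [cylN, hindep.meas_biInter (fun i _ => ⟨{extN N u i}, MeasurableSet.of_discrete, rfl⟩)]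
  exact Finset.prod_congr rfl (fun i _ => hlaw i _)

lemma meas_cylN_neg (hindep : iIndepFun U μ)
    (hlaw : ∀ i : ℕ, ∀ k : ℤ, μ {ω | U i ω = k} = ENNReal.ofReal (q ^ k.natAbs / c))
    (N : ℕ) (u : Fin N → ℤ) :
    μ (cylN U N (-u)) = μ (cylN U N u) := by
  rw [meas_cylN hindep hlaw, meas_cylN hindep hlaw]
  refine Finset.prod_congr rfl (fun i _ => ?_)
  have hna : (extN N (-u) i).natAbs = (extN N u i).natAbs := by
    unfold extN
    split_ifs with h
    · simp
    · simp
  rw [hna]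

lemma decompQ (hmeas : ∀ i, Measurable (U i)) (N : ℕ) (Q : (Fin N → ℤ) → Prop) :
    {ω | Q (fun i : Fin N => U i ω)}
      = ⋃ u : Fin N → ℤ, if Q u then cylN U N u else ∅ := by
  ext ω
  simp only [Set.mem_setOf_eq, Set.mem_iUnion]
  constructor
  · intro hQ
    refine ⟨fun i => U i ω, ?_⟩
    rw [if_pos hQ]
    refine Set.mem_iInter₂.2 (fun i hi => ?_)
    have hiN : i < N := Finset.mem_range.1 hi
    simp only [Set.mem_preimage, Set.mem_singleton_iff, extN, hiN, dif_pos]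
  · rintro ⟨u, hu⟩
    by_cases hQ : Q u
    · rw [if_pos hQ] at hu
      have : (fun i : Fin N => U i ω) = u := by
        funext i
        have := Set.mem_iInter₂.1 hu i (Finset.mem_range.2 i.isLt)
        simp only [Set.mem_preimage, Set.mem_singleton_iff, extN] at this
        rw [this]
        simp
      rw [this]
      exact hQ
    · rw [if_neg hQ] at hu
      exact absurd hu (Set.notMem_empty ω)

lemma cylN_disjoint (N : ℕ) {u u' : Fin N → ℤ} (hne : u ≠ u') :
    Disjoint (cylN U N u) (cylN U N u') := by
  rw [Set.disjoint_left]
  intro ω h1 h2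
  apply hne
  funext i
  have e1 := Set.mem_iInter₂.1 h1 i (Finset.mem_range.2 i.isLt)
  have e2 := Set.mem_iInter₂.1 h2 i (Finset.mem_range.2 i.isLt)
  simp only [Set.mem_preimage, Set.mem_singleton_iff, extN] at e1 e2
  rw [dif_pos i.isLt] at e1 e2
  simp only [Fin.eta] at e1 e2
  rw [← e1, ← e2]

lemma meas_Q (hmeas : ∀ i, Measurable (U i))
    (hindep : iIndepFun U μ)
    (hlaw : ∀ i : ℕ, ∀ k : ℤ, μ {ω | U i ω = k} = ENNReal.ofReal (q ^ k.natAbs / c))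
    (N : ℕ) (Q : (Fin N → ℤ) → Prop) :
    μ {ω | Q (fun i : Fin N => U i ω)}
      = ∑' u : Fin N → ℤ, if Q u then μ (cylN U N u) else 0 := by
  rw [decompQ hmeas N Q, measure_iUnion]
  · refine tsum_congr (fun u => ?_)
    split_ifs
    · rfl
    · exact measure_empty
  · intro u u' hne
    rw [Function.onFun]
    split_ifs with h1 h2
    · exact cylN_disjoint N hne
    all_goals simp
  · intro u
    split_ifs
    · exact MeasurableSet.biInter (Set.to_countable _)
        (fun i _ => (MeasurableSet.singleton _).preimage (hmeas i))
    · exact MeasurableSet.empty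

/-- symmetry of the law of the increment vector -/
lemma sym_meas (hmeas : ∀ i, Measurable (U i))
    (hindep : iIndepFun U μ)
    (hlaw : ∀ i : ℕ, ∀ k : ℤ, μ {ω | U i ω = k} = ENNReal.ofReal (q ^ k.natAbs / c))
    (N : ℕ) (Q : (Fin N → ℤ) → Prop) :
    μ {ω | Q (fun i : Fin N => U i ω)} = μ {ω | Q (-(fun i : Fin N => U i ω))} := by
  have h1 := meas_Q hmeas hindep hlaw N Q
  have h2 := meas_Q hmeas hindep hlaw N (fun u => Q (-u))
  rw [h1, h2]
  have := Equiv.tsum_eq (Equiv.neg (Fin N → ℤ))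
    (fun u => if Q u then μ (cylN U N u) else 0)
  rw [← this]
  refine tsum_congr (fun u => ?_)
  simp only [Equiv.neg_apply]
  split_ifs with h1'
  · exact meas_cylN_neg hindep hlaw N u
  · rfl


lemma measX (hmeas : ∀ i, Measurable (U i))
    (hX : ∀ n ω, X n ω = ∑ i ∈ Finset.range n, U i ω) (n : ℕ) :
    Measurable (X n) := by
  have : X n = fun ω => ∑ i ∈ Finset.range n, U i ω := funext (hX n)
  rw [this]
  exact Finset.measurable_sum _ (fun i _ => hmeas i)

lemma sym_DM (hmeas : ∀ i, Measurable (U i))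
    (hindep : iIndepFun U μ)
    (hlaw : ∀ i : ℕ, ∀ k : ℤ, μ {ω | U i ω = k} = ENNReal.ofReal (q ^ k.natAbs / c))
    (hX : ∀ n ω, X n ω = ∑ i ∈ Finset.range n, U i ω)
    (M N : ℕ) :
    μ {ω | ∃ n, n < N ∧ (M : ℤ) ≤ X n ω} = μ {ω | ∃ n, n < N ∧ X n ω ≤ -(M : ℤ)} := by
  set Q : (Fin N → ℤ) → Prop := fun u => ∃ n, n < N ∧ (M : ℤ) ≤ ∑ i ∈ Finset.range n, extN N u i
    with hQ
  have key := sym_meas hmeas hindep hlaw N Q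
  have e1 : {ω | Q (fun i : Fin N => U i ω)} = {ω | ∃ n, n < N ∧ (M : ℤ) ≤ X n ω} := by
    ext ω
    simp only [hQ, Set.mem_setOf_eq]
    constructor
    · rintro ⟨n, hn, hs⟩
      refine ⟨n, hn, ?_⟩
      rw [hX]
      refine le_trans hs (le_of_eq (Finset.sum_congr rfl (fun i hi => ?_)))
      have hiN : i < N := lt_of_lt_of_le (Finset.mem_range.1 hi) (by omega)
      simp [extN, hiN]
    · rintro ⟨n, hn, hs⟩
      refine ⟨n, hn, ?_⟩
      rw [hX] at hs
      refine le_trans hs (le_of_eq (Finset.sum_congr rfl (fun i hi => ?_)))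
      have hiN : i < N := lt_of_lt_of_le (Finset.mem_range.1 hi) (by omega)
      simp [extN, hiN]
  have e2 : {ω | Q (-(fun i : Fin N => U i ω))} = {ω | ∃ n, n < N ∧ X n ω ≤ -(M : ℤ)} := by
    ext ω
    simp only [hQ, Set.mem_setOf_eq]
    have hsum : ∀ n, n < N → ∑ i ∈ Finset.range n, extN N (-(fun i : Fin N => U i ω)) i
        = -(X n ω) := by
      intro n hn
      rw [hX, ← Finset.sum_neg_distrib]
      refine Finset.sum_congr rfl (fun i hi => ?_)
      have hiN : i < N := lt_of_lt_of_le (Finset.mem_range.1 hi) (by omega)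
      simp [extN, hiN]
    constructor
    · rintro ⟨n, hn, hs⟩
      rw [hsum n hn] at hs
      exact ⟨n, hn, by omega⟩
    · rintro ⟨n, hn, hs⟩
      exact ⟨n, hn, by rw [hsum n hn]; omega⟩
  rw [← e1, ← e2, key]

/-- μ A = μ B -/
lemma sym_AB [IsProbabilityMeasure μ] (hmeas : ∀ i, Measurable (U i))
    (hindep : iIndepFun U μ)
    (hlaw : ∀ i : ℕ, ∀ k : ℤ, μ {ω | U i ω = k} = ENNReal.ofReal (q ^ k.natAbs / c))
    (hX : ∀ n ω, X n ω = ∑ i ∈ Finset.range n, U i ω) :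
    μ {ω | ∀ M : ℕ, ∃ n, (M : ℤ) ≤ X n ω} = μ {ω | ∀ M : ℕ, ∃ n, X n ω ≤ -(M : ℤ)} := by
  have measDM : ∀ M N : ℕ, MeasurableSet {ω | ∃ n, n < N ∧ (M : ℤ) ≤ X n ω} := by
    intro M N
    have : {ω | ∃ n, n < N ∧ (M : ℤ) ≤ X n ω}
        = ⋃ n, ⋃ (_ : n < N), (X n) ⁻¹' Set.Ici (M : ℤ) := by
      ext ω; simp [Set.mem_iUnion]
    rw [this]
    exact MeasurableSet.iUnion (fun n => MeasurableSet.iUnion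
      (fun _ => MeasurableSet.of_discrete.preimage (measX hmeas hX n)))
  have measDM' : ∀ M N : ℕ, MeasurableSet {ω | ∃ n, n < N ∧ X n ω ≤ -(M : ℤ)} := by
    intro M N
    have : {ω | ∃ n, n < N ∧ X n ω ≤ -(M : ℤ)}
        = ⋃ n, ⋃ (_ : n < N), (X n) ⁻¹' Set.Iic (-(M : ℤ)) := by
      ext ω; simp [Set.mem_iUnion]
    rw [this]
    exact MeasurableSet.iUnion (fun n => MeasurableSet.iUnion
      (fun _ => MeasurableSet.of_discrete.preimage (measX hmeas hX n)))
  -- A as ⋂ M ⋃ N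
  have hA : {ω : Ω | ∀ M : ℕ, ∃ n, (M : ℤ) ≤ X n ω}
      = ⋂ M : ℕ, ⋃ N : ℕ, {ω | ∃ n, n < N ∧ (M : ℤ) ≤ X n ω} := by
    ext ω
    simp only [Set.mem_iInter, Set.mem_iUnion, Set.mem_setOf_eq]
    constructor
    · intro h M
      obtain ⟨n, hn⟩ := h M
      exact ⟨n + 1, n, by omega, hn⟩
    · intro h M
      obtain ⟨N, n, _, hn⟩ := h M
      exact ⟨n, hn⟩
  have hB : {ω : Ω | ∀ M : ℕ, ∃ n, X n ω ≤ -(M : ℤ)}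
      = ⋂ M : ℕ, ⋃ N : ℕ, {ω | ∃ n, n < N ∧ X n ω ≤ -(M : ℤ)} := by
    ext ω
    simp only [Set.mem_iInter, Set.mem_iUnion, Set.mem_setOf_eq]
    constructor
    · intro h M
      obtain ⟨n, hn⟩ := h M
      exact ⟨n + 1, n, by omega, hn⟩
    · intro h M
      obtain ⟨N, n, _, hn⟩ := h M
      exact ⟨n, hn⟩
  have hmonoA : ∀ M : ℕ, Monotone (fun N => {ω | ∃ n, n < N ∧ (M : ℤ) ≤ X n ω}) := by
    intro M N N' hNN ω
    simp only [Set.mem_setOf_eq]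
    rintro ⟨n, hn, h⟩; exact ⟨n, by omega, h⟩
  have hmonoB : ∀ M : ℕ, Monotone (fun N => {ω | ∃ n, n < N ∧ X n ω ≤ -(M : ℤ)}) := by
    intro M N N' hNN ω
    simp only [Set.mem_setOf_eq]
    rintro ⟨n, hn, h⟩; exact ⟨n, by omega, h⟩
  have hantiA : Antitone (fun M : ℕ => ⋃ N : ℕ, {ω | ∃ n, n < N ∧ (M : ℤ) ≤ X n ω}) := by
    intro M M' hMM ω hω
    simp only [Set.mem_iUnion, Set.mem_setOf_eq] at hω ⊢
    obtain ⟨N, n, hn, h⟩ := hω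
    refine ⟨N, n, hn, ?_⟩
    have : (M : ℤ) ≤ (M' : ℤ) := by exact_mod_cast hMM
    omega
  have hantiB : Antitone (fun M : ℕ => ⋃ N : ℕ, {ω | ∃ n, n < N ∧ X n ω ≤ -(M : ℤ)}) := by
    intro M M' hMM ω hω
    simp only [Set.mem_iUnion, Set.mem_setOf_eq] at hω ⊢
    obtain ⟨N, n, hn, h⟩ := hω
    refine ⟨N, n, hn, ?_⟩
    have : (M : ℤ) ≤ (M' : ℤ) := by exact_mod_cast hMM
    omega
  rw [hA, hB]
  rw [Directed.measure_iInter
      (fun M => ((MeasurableSet.iUnion (fun N => measDM M N)).nullMeasurableSet))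
      ((hantiA.directed_ge))
      ⟨0, measure_ne_top μ _⟩,
    Directed.measure_iInter
      (fun M => ((MeasurableSet.iUnion (fun N => measDM' M N)).nullMeasurableSet))
      ((hantiB.directed_ge))
      ⟨0, measure_ne_top μ _⟩]
  refine iInf_congr (fun M => ?_)
  rw [Directed.measure_iUnion ((hmonoA M).directed_le),
    Directed.measure_iUnion ((hmonoB M).directed_le)]
  exact iSup_congr (fun N => sym_DM hmeas hindep hlaw hX M N)


/-- the event `sup X = ∞` is a tail event -/
lemma tail_A (hX : ∀ n ω, X n ω = ∑ i ∈ Finset.range n, U i ω) :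
    MeasurableSet[Filter.limsup (fun i => MeasurableSpace.comap (U i) inferInstance) atTop]
      {ω : Ω | ∀ M : ℕ, ∃ n, (M : ℤ) ≤ X n ω} := by
  rw [limsup_eq_iInf_iSup_of_nat]
  rw [MeasurableSpace.measurableSet_iInf]
  intro m
  set mm : MeasurableSpace Ω := ⨆ i ≥ m, MeasurableSpace.comap (U i) inferInstance with hmm
  -- rewrite A using only increments from time m on
  have hAeq : {ω : Ω | ∀ M : ℕ, ∃ n, (M : ℤ) ≤ X n ω}
      = {ω : Ω | ∀ M : ℕ, ∃ len, (M : ℤ) ≤ ∑ j ∈ Finset.range len, U (m + j) ω} := by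
    ext ω
    have hshift : ∀ len, ∑ j ∈ Finset.range len, U (m + j) ω = X (m + len) ω - X m ω := by
      intro len
      rw [hX, hX, Finset.sum_range_add]
      ring
    simp only [Set.mem_setOf_eq]
    constructor
    · intro h M
      -- need len with sum ≥ M; use target M + |X m| + max_{j<m} stuff
      set C : ℕ := (Finset.range (m + 1)).sup (fun j => (X j ω).toNat) with hC
      have hbound : ∀ j, j ≤ m → X j ω ≤ (C : ℤ) := by
        intro j hj
        have h1 : (X j ω).toNat ≤ C := Finset.le_sup (f := fun j => (X j ω).toNat)
          (Finset.mem_range.2 (show j < m + 1 by omega))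
        have := Int.self_le_toNat (X j ω)
        exact le_trans this (by exact_mod_cast h1)
      obtain ⟨n, hn⟩ := h (M + C + 1)
      have hcast : ((M + C + 1 : ℕ) : ℤ) = (M : ℤ) + (C : ℤ) + 1 := by push_cast; ring
      rw [hcast] at hn
      have hnm : m ≤ n := by
        by_contra hlt
        have := hbound n (by omega)
        omega
      refine ⟨n - m, ?_⟩
      rw [hshift (n - m)]
      have hmn : m + (n - m) = n := by omega
      rw [hmn]
      have := hbound m le_rfl
      omega
    · intro h M
      obtain ⟨len, hlen⟩ := h (M + (-(X m ω)).toNat)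
      rw [hshift len] at hlen
      refine ⟨m + len, ?_⟩
      have hcast : ((M + (-(X m ω)).toNat : ℕ) : ℤ) = (M : ℤ) + ((-(X m ω)).toNat : ℤ) := by
        push_cast; ring
      rw [hcast] at hlen
      have := Int.self_le_toNat (-(X m ω))
      omega
  rw [hAeq]
  -- now show measurability wrt mm via cylinders
  have hcylmeas : ∀ (len : ℕ) (u : Fin len → ℤ),
      MeasurableSet[mm] (⋂ j : Fin len, (U (m + j)) ⁻¹' {u j}) := by
    intro len u
    refine MeasurableSet.iInter (fun j => ?_)
    have hle : MeasurableSpace.comap (U (m + j)) inferInstance ≤ mm :=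
      le_iSup₂ (f := fun (i : ℕ) (_ : i ≥ m) =>
        MeasurableSpace.comap (U i) inferInstance) (m + ↑j) (by omega)
    exact hle _ ⟨{u j}, MeasurableSet.of_discrete, rfl⟩
  have hinner : ∀ (M len : ℕ),
      {ω : Ω | (M : ℤ) ≤ ∑ j ∈ Finset.range len, U (m + j) ω}
        = ⋃ u : Fin len → ℤ, if (M : ℤ) ≤ ∑ j : Fin len, u j
            then ⋂ j : Fin len, (U (m + j)) ⁻¹' {u j} else ∅ := by
    intro M len
    ext ω
    simp only [Set.mem_setOf_eq, Set.mem_iUnion]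
    constructor
    · intro hω
      refine ⟨fun j => U (m + j) ω, ?_⟩
      rw [if_pos]
      · exact Set.mem_iInter.2 (fun j => rfl)
      · rw [Fin.sum_univ_eq_sum_range (fun j => U (m + j) ω) len]
        exact hω
    · rintro ⟨u, hu⟩
      by_cases hcond : (M : ℤ) ≤ ∑ j : Fin len, u j
      · rw [if_pos hcond] at hu
        have hval : ∀ j : Fin len, U (m + j) ω = u j := fun j => Set.mem_iInter.1 hu j
        rw [← Fin.sum_univ_eq_sum_range (fun j => U (m + j) ω) len]
        calc (M : ℤ) ≤ ∑ j : Fin len, u j := hcond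
        _ = ∑ j : Fin len, U (m + ↑j) ω := Finset.sum_congr rfl (fun j _ => (hval j).symm)
      · rw [if_neg hcond] at hu
        exact absurd hu (Set.notMem_empty ω)
  have : {ω : Ω | ∀ M : ℕ, ∃ len, (M : ℤ) ≤ ∑ j ∈ Finset.range len, U (m + j) ω}
      = ⋂ M : ℕ, ⋃ len : ℕ, {ω : Ω | (M : ℤ) ≤ ∑ j ∈ Finset.range len, U (m + j) ω} := by
    ext ω; simp [Set.mem_iInter, Set.mem_iUnion]
  rw [this]
  refine MeasurableSet.iInter (fun M => MeasurableSet.iUnion (fun len => ?_))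
  rw [hinner M len]
  refine MeasurableSet.iUnion (fun u => ?_)
  split_ifs
  · exact hcylmeas len u
  · exact MeasurableSet.empty

/-- the event `inf X = -∞` is a tail event -/
lemma tail_B (hX : ∀ n ω, X n ω = ∑ i ∈ Finset.range n, U i ω) :
    MeasurableSet[Filter.limsup (fun i => MeasurableSpace.comap (U i) inferInstance) atTop]
      {ω : Ω | ∀ M : ℕ, ∃ n, X n ω ≤ -(M : ℤ)} := by
  rw [limsup_eq_iInf_iSup_of_nat]
  rw [MeasurableSpace.measurableSet_iInf]
  intro m
  set mm : MeasurableSpace Ω := ⨆ i ≥ m, MeasurableSpace.comap (U i) inferInstance with hmm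
  have hAeq : {ω : Ω | ∀ M : ℕ, ∃ n, X n ω ≤ -(M : ℤ)}
      = {ω : Ω | ∀ M : ℕ, ∃ len, ∑ j ∈ Finset.range len, U (m + j) ω ≤ -(M : ℤ)} := by
    ext ω
    have hshift : ∀ len, ∑ j ∈ Finset.range len, U (m + j) ω = X (m + len) ω - X m ω := by
      intro len
      rw [hX, hX, Finset.sum_range_add]
      ring
    simp only [Set.mem_setOf_eq]
    constructor
    · intro h M
      set C : ℕ := (Finset.range (m + 1)).sup (fun j => (-(X j ω)).toNat) with hC
      have hbound : ∀ j, j ≤ m → -(C : ℤ) ≤ X j ω := by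
        intro j hj
        have h1 : (-(X j ω)).toNat ≤ C := Finset.le_sup (f := fun j => (-(X j ω)).toNat)
          (Finset.mem_range.2 (show j < m + 1 by omega))
        have := Int.self_le_toNat (-(X j ω))
        have h2 : ((-(X j ω)).toNat : ℤ) ≤ (C : ℤ) := by exact_mod_cast h1
        omega
      obtain ⟨n, hn⟩ := h (M + C + 1)
      have hcast : ((M + C + 1 : ℕ) : ℤ) = (M : ℤ) + (C : ℤ) + 1 := by push_cast; ring
      rw [hcast] at hn
      have hnm : m ≤ n := by
        by_contra hlt
        have := hbound n (by omega)
        omega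
      refine ⟨n - m, ?_⟩
      rw [hshift (n - m)]
      have hmn : m + (n - m) = n := by omega
      rw [hmn]
      have := hbound m le_rfl
      omega
    · intro h M
      obtain ⟨len, hlen⟩ := h (M + (X m ω).toNat)
      rw [hshift len] at hlen
      refine ⟨m + len, ?_⟩
      have hcast : ((M + (X m ω).toNat : ℕ) : ℤ) = (M : ℤ) + ((X m ω).toNat : ℤ) := by
        push_cast; ring
      rw [hcast] at hlen
      have := Int.self_le_toNat (X m ω)
      omega
  rw [hAeq]
  have hcylmeas : ∀ (len : ℕ) (u : Fin len → ℤ),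
      MeasurableSet[mm] (⋂ j : Fin len, (U (m + j)) ⁻¹' {u j}) := by
    intro len u
    refine MeasurableSet.iInter (fun j => ?_)
    have hle : MeasurableSpace.comap (U (m + j)) inferInstance ≤ mm :=
      le_iSup₂ (f := fun (i : ℕ) (_ : i ≥ m) =>
        MeasurableSpace.comap (U i) inferInstance) (m + ↑j) (by omega)
    exact hle _ ⟨{u j}, MeasurableSet.of_discrete, rfl⟩
  have hinner : ∀ (M len : ℕ),
      {ω : Ω | ∑ j ∈ Finset.range len, U (m + j) ω ≤ -(M : ℤ)}
        = ⋃ u : Fin len → ℤ, if (∑ j : Fin len, u j) ≤ -(M : ℤ)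
            then ⋂ j : Fin len, (U (m + j)) ⁻¹' {u j} else ∅ := by
    intro M len
    ext ω
    simp only [Set.mem_setOf_eq, Set.mem_iUnion]
    constructor
    · intro hω
      refine ⟨fun j => U (m + j) ω, ?_⟩
      rw [if_pos]
      · exact Set.mem_iInter.2 (fun j => rfl)
      · rw [Fin.sum_univ_eq_sum_range (fun j => U (m + j) ω) len]
        exact hω
    · rintro ⟨u, hu⟩
      by_cases hcond : (∑ j : Fin len, u j) ≤ -(M : ℤ)
      · rw [if_pos hcond] at hu
        have hval : ∀ j : Fin len, U (m + j) ω = u j := fun j => Set.mem_iInter.1 hu j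
        rw [← Fin.sum_univ_eq_sum_range (fun j => U (m + j) ω) len]
        calc ∑ j : Fin len, U (m + ↑j) ω = ∑ j : Fin len, u j :=
            Finset.sum_congr rfl (fun j _ => hval j)
        _ ≤ -(M : ℤ) := hcond
      · rw [if_neg hcond] at hu
        exact absurd hu (Set.notMem_empty ω)
  have : {ω : Ω | ∀ M : ℕ, ∃ len, ∑ j ∈ Finset.range len, U (m + j) ω ≤ -(M : ℤ)}
      = ⋂ M : ℕ, ⋃ len : ℕ, {ω : Ω | ∑ j ∈ Finset.range len, U (m + j) ω ≤ -(M : ℤ)} := by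
    ext ω; simp [Set.mem_iInter, Set.mem_iUnion]
  rw [this]
  refine MeasurableSet.iInter (fun M => MeasurableSet.iUnion (fun len => ?_))
  rw [hinner M len]
  refine MeasurableSet.iUnion (fun u => ?_)
  split_ifs
  · exact hcylmeas len u
  · exact MeasurableSet.empty


lemma part_one [IsProbabilityMeasure μ] (hmeas : ∀ i, Measurable (U i))
    (hindep : iIndepFun U μ)
    (hq0 : 0 < q) (hq1 : q < 1) (hc : 0 < c)
    (hlaw : ∀ i : ℕ, ∀ k : ℤ, μ {ω | U i ω = k} = ENNReal.ofReal (q ^ k.natAbs / c))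
    (hX : ∀ n ω, X n ω = ∑ i ∈ Finset.range n, U i ω) :
    μ {ω : Ω | ∃ i, 1 ≤ i ∧ X i ω ≤ 0}ᶜ = 0 := by
  set A : Set Ω := {ω | ∀ M : ℕ, ∃ n, (M : ℤ) ≤ X n ω} with hA
  set B : Set Ω := {ω | ∀ M : ℕ, ∃ n, X n ω ≤ -(M : ℤ)} with hB
  have hAmeas : MeasurableSet A := by
    have : A = ⋂ M : ℕ, ⋃ n : ℕ, (X n) ⁻¹' Set.Ici (M : ℤ) := by
      ext ω; simp [hA, Set.mem_iInter, Set.mem_iUnion]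
    rw [this]
    exact MeasurableSet.iInter (fun M => MeasurableSet.iUnion
      (fun n => MeasurableSet.of_discrete.preimage (measX hmeas hX n)))
  have hBmeas : MeasurableSet B := by
    have : B = ⋂ M : ℕ, ⋃ n : ℕ, (X n) ⁻¹' Set.Iic (-(M : ℤ)) := by
      ext ω; simp [hB, Set.mem_iInter, Set.mem_iUnion]
    rw [this]
    exact MeasurableSet.iInter (fun M => MeasurableSet.iUnion
      (fun n => MeasurableSet.of_discrete.preimage (measX hmeas hX n)))
  have hABc : μ (A ∪ B)ᶜ = 0 := by
    have hsub : (A ∪ B)ᶜ ⊆ ⋃ M : ℕ, {ω | ∀ n, |X n ω| ≤ (M : ℤ)} := by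
      intro ω hω
      rw [Set.mem_compl_iff, Set.mem_union] at hω
      push_neg at hω
      obtain ⟨hωA, hωB⟩ := hω
      rw [hA, Set.mem_setOf_eq] at hωA
      rw [hB, Set.mem_setOf_eq] at hωB
      push_neg at hωA hωB
      obtain ⟨M1, hM1⟩ := hωA
      obtain ⟨M2, hM2⟩ := hωB
      refine Set.mem_iUnion.2 ⟨M1 + M2, fun n => ?_⟩
      have h1 := hM1 n
      have h2 := hM2 n
      have hcast : ((M1 + M2 : ℕ) : ℤ) = (M1 : ℤ) + (M2 : ℤ) := by push_cast; ring
      rw [abs_le, hcast]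
      omega
    exact measure_mono_null hsub
      (measure_iUnion_null (fun M => bounded_null hmeas hindep hq0 hq1 hc hlaw hX M))
  have hABfull : μ (A ∪ B) = 1 := (prob_compl_eq_zero_iff (hAmeas.union hBmeas)).1 hABc
  have hA01 := measure_zero_or_one_of_measurableSet_limsup_atTop
    (fun i => (hmeas i).comap_le) hindep.iIndep (tail_A hX)
  have hB01 := measure_zero_or_one_of_measurableSet_limsup_atTop
    (fun i => (hmeas i).comap_le) hindep.iIndep (tail_B hX)
  have hABeq := sym_AB hmeas hindep hlaw hX
  have hB1 : μ B = 1 := by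
    rcases hB01 with h0 | h1
    · exfalso
      have hA0 : μ A = 0 := by rw [hABeq]; exact h0
      have : μ (A ∪ B) ≤ μ A + μ B := measure_union_le A B
      rw [hA0, h0, hABfull] at this
      simp at this
    · exact h1
  have hBc : μ Bᶜ = 0 := (prob_compl_eq_zero_iff hBmeas).2 hB1
  refine measure_mono_null ?_ hBc
  rw [Set.compl_subset_compl]
  intro ω hω
  rw [hB, Set.mem_setOf_eq] at hω
  obtain ⟨n, hn⟩ := hω 1
  have hX0 : X 0 ω = 0 := by simp [hX]
  rcases Nat.eq_zero_or_pos n with h0 | h0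
  · subst h0; omega
  · exact ⟨n, h0, by omega⟩



end LadderAux

/-- For the random walk `X` with i.i.d. discrete Laplace increments and
`ρ := inf{i ≥ 1 : X_i ≤ 0}`: `ρ < ∞` a.s., the stopped path `(ρ, X_1, …, X_{ρ-1})`
is independent of `X_ρ`, and `-X_ρ` is geometric on `{0,1,2,…}` with parameter
`1 - e^{-β/2}`. -/
theorem ladder_epoch_geometric (β : ℝ) (hβ : 0 < β)
    (c : ℝ) (hc : c = ∑' k : ℤ, Real.exp (-(β / 2) * |(k : ℝ)|))
    {Ω : Type*} [MeasurableSpace Ω] (μ : Measure Ω) [IsProbabilityMeasure μ]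
    (U : ℕ → Ω → ℤ) (hmeas : ∀ i, Measurable (U i))
    (hindep : iIndepFun U μ)
    (hlaw : ∀ i : ℕ, ∀ k : ℤ,
      μ {ω | U i ω = k} = ENNReal.ofReal (Real.exp (-(β / 2) * |(k : ℝ)|) / c))
    (X : ℕ → Ω → ℤ) (hX : ∀ n ω, X n ω = ∑ i ∈ Finset.range n, U i ω)
    (ρ : Ω → ℕ) (hρ : ∀ ω, ρ ω = sInf {i : ℕ | 1 ≤ i ∧ X i ω ≤ 0}) :
    (∀ᵐ ω ∂μ, ∃ i : ℕ, 1 ≤ i ∧ X i ω ≤ 0) ∧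
    IndepFun (fun ω => (ρ ω, fun i : ℕ => if i < ρ ω then X i ω else 0))
      (fun ω => X (ρ ω) ω) μ ∧
    (∀ k : ℕ, μ {ω | X (ρ ω) ω = -(k : ℤ)} =
      ENNReal.ofReal ((1 - Real.exp (-β / 2)) * Real.exp (-β / 2) ^ k)) := by
  set q : ℝ := Real.exp (-(β / 2)) with hqdef
  have hq0 : 0 < q := Real.exp_pos _
  have hq1 : q < 1 := by
    rw [hqdef]
    rw [Real.exp_lt_one_iff]
    linarith
  have hexp : ∀ k : ℤ, Real.exp (-(β / 2) * |(k : ℝ)|) = q ^ k.natAbs := by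
    intro k
    have habs : |(k : ℝ)| = (k.natAbs : ℝ) := by
      rw [← Int.cast_abs, Int.abs_eq_natAbs, Int.cast_natCast]
    rw [habs, mul_comm, Real.exp_nat_mul]
  have hlaw' : ∀ i : ℕ, ∀ k : ℤ,
      μ {ω | U i ω = k} = ENNReal.ofReal (q ^ k.natAbs / c) := by
    intro i k
    rw [hlaw i k, hexp k]
  have hcq : c = ∑' k : ℤ, q ^ k.natAbs := by
    rw [hc]
    exact tsum_congr hexp
  have hc0 : 0 < c := by
    rw [hcq]
    exact lt_of_lt_of_le one_pos (one_le_csum hq0.le hq1)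
  have part1 : μ {ω : Ω | ∃ i, 1 ≤ i ∧ X i ω ≤ 0}ᶜ = 0 :=
    part_one hmeas hindep hq0 hq1 hc0 hlaw' hX
  have hWlaw : ∀ t : Set ℤ, μ ((fun ω => X (ρ ω) ω) ⁻¹' t) = nuq q t := by
    intro t
    have h1 := main_decomp hmeas hindep hq0 hq1 hc0 hlaw' hX hρ part1 Set.univ t
    have h2 := proj_decomp hmeas hX hρ part1 (Set.univ : Set (ℕ × (ℕ → ℤ)))
    rw [Set.preimage_univ, Set.univ_inter] at h1
    rw [Set.preimage_univ, measure_univ] at h2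
    rw [h1, ← h2, one_mul]
  have hqeq : Real.exp (-β / 2) = q := by
    rw [hqdef, neg_div]
  refine ⟨?_, ?_, ?_⟩
  · rw [ae_iff]
    exact part1
  · rw [indepFun_iff_measure_inter_preimage_eq_mul]
    intro s t hs ht
    rw [main_decomp hmeas hindep hq0 hq1 hc0 hlaw' hX hρ part1 s t,
      proj_decomp hmeas hX hρ part1 s, hWlaw t]
  · intro k
    have hset : {ω | X (ρ ω) ω = -(k : ℤ)} = (fun ω => X (ρ ω) ω) ⁻¹' {-(k : ℤ)} := by
      ext ω
      simp
    rw [hset, hWlaw, nuq]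
    rw [tsum_eq_single k]
    · rw [if_pos (show -(k : ℤ) ∈ ({-(k : ℤ)} : Set ℤ) from rfl), hqeq]
    · intro k' hk'
      have hne : ¬ (-(k' : ℤ) ∈ ({-(k : ℤ)} : Set ℤ)) := by
        simp only [Set.mem_singleton_iff, neg_inj, Int.natCast_inj]
        exact hk'
      rw [if_neg hne]
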